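/- Consider the continuation process generated from a symmetric $A \in \mathbb{R}^{n\times n}$, block vectors $v_{k-1}, v_k \in \mathbb{R}^{n\times p}$, blocks $\alpha_k, \beta_k \in \mathbb{R}^{p\times p}$, and $W_k \in \mathbb{R}^{n\times m}$ with $W_k^T W_k = I_m$. Then for all $j \ge 3$, $q_{k+1}\big(q_{k+1}^T A q_{k+j-1} - q_{k+1}^T q_{k+j-2}\beta_{k+j-1}^T\big) = q_{k+1}\beta_{k+1} v_k^T q_{k+j-1}$. -/

import Mathlib

open Matrix
open scoped Matrix.Norms.L2Operator

noncomputable section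

/-- The continuation process generated from a symmetric `A`, block vectors
`v_{k-1} = vkm1`, `v_k = vk`, blocks `α_k = αk`, `β_k = βk`, and `W = W_k` with
orthonormal columns.  Here `q j` stands for `q_{k+j}` (the value at `j = 0` is
irrelevant), `pdim j ≤ p` is the number of columns of `q_{k+j}`, `β1` stands for
`β_{k+1}` and `βs j` for `β_{k+j+2}`.  Each `q_{k+j}` has orthonormal columns which
form an orthonormal basis of the column space of `(I - P_j) q̃_{k+j}` (this is
captured by the defining equations `q_{k+j} β_{k+j} = (I - P_j) q̃_{k+j}` together
with the full row rank of the `β`'s), where `P_1 = W Wᵀ`,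
`P_2 = P_1 + q_{k+1} q_{k+1}ᵀ` and `P_j = P_2 + q_{k+j-1} q_{k+j-1}ᵀ` for `j ≥ 3`. -/
structure ContProcess (n p m : ℕ) (A : Matrix (Fin n) (Fin n) ℝ)
    (vkm1 vk : Matrix (Fin n) (Fin p) ℝ) (αk βk : Matrix (Fin p) (Fin p) ℝ)
    (W : Matrix (Fin n) (Fin m) ℝ) : Type where
  pdim : ℕ → ℕ
  pdim_le : ∀ j, pdim j ≤ p
  q : (j : ℕ) → Matrix (Fin n) (Fin (pdim j)) ℝ
  β1 : Matrix (Fin (pdim 1)) (Fin p) ℝ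
  βs : (j : ℕ) → Matrix (Fin (pdim (j+2))) (Fin (pdim (j+1))) ℝ
  hW : Wᵀ * W = 1
  horth : ∀ j, 1 ≤ j → (q j)ᵀ * q j = 1
  hq1 : q 1 * β1 = (1 - W * Wᵀ) * (A * vk - vk * αk - vkm1 * βkᵀ)
  hq2 : q 2 * βs 0 = (1 - (W * Wᵀ + q 1 * (q 1)ᵀ)) * (A * q 1 - vk * β1ᵀ)
  hq3 : ∀ j, q (j+3) * βs (j+1) =
      (1 - (W * Wᵀ + q 1 * (q 1)ᵀ + q (j+2) * (q (j+2))ᵀ)) *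
        (A * q (j+2) - q (j+1) * (βs j)ᵀ)
  hβ1rank : β1.rank = pdim 1
  hβsrank : ∀ j, (βs j).rank = pdim (j+2)

lemma cancel_right {r c s : ℕ} (B : Matrix (Fin r) (Fin c) ℝ) (hB : B.rank = r)
    (X : Matrix (Fin s) (Fin r) ℝ) (h : X * B = 0) : X = 0 := by
  have hsurj : Function.Surjective B.mulVecLin := by
    rw [← LinearMap.range_eq_top]
    apply Submodule.eq_top_of_finrank_eq
    simpa [Matrix.rank] using hB
  ext i j
  obtain ⟨v, hv⟩ := hsurj (Pi.single j 1)
  have h2 := congrArg (fun M => M.mulVec v i) h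
  simp only [← Matrix.mulVec_mulVec] at h2
  rw [show B.mulVec v = Pi.single j 1 from hv] at h2
  simpa [Matrix.mulVec_single] using h2

variable {n p m : ℕ} {A : Matrix (Fin n) (Fin n) ℝ}
    {vkm1 vk : Matrix (Fin n) (Fin p) ℝ} {αk βk : Matrix (Fin p) (Fin p) ℝ}
    {W : Matrix (Fin n) (Fin m) ℝ} (P : ContProcess n p m A vkm1 vk αk βk W)

lemma qW : ∀ i, 1 ≤ i → Wᵀ * P.q i = 0 := by
  intro i
  induction i using Nat.strong_induction_on with
  | _ i IH =>
  intro hi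
  match i, hi with
  | 1, _ =>
    apply cancel_right P.β1 P.hβ1rank
    have h := congrArg (Wᵀ * ·) P.hq1
    simpa [Matrix.mul_sub, Matrix.sub_mul, ← Matrix.mul_assoc, P.hW] using h
  | 2, _ =>
    apply cancel_right (P.βs 0) (P.hβsrank 0)
    have h := congrArg (Wᵀ * ·) P.hq2
    have h1 : Wᵀ * P.q 1 = 0 := IH 1 (by norm_num) (by norm_num)
    simpa [Matrix.mul_sub, Matrix.sub_mul, Matrix.mul_add, Matrix.add_mul,
      ← Matrix.mul_assoc, P.hW, h1] using h
  | (j+3), _ =>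
    apply cancel_right (P.βs (j+1)) (P.hβsrank (j+1))
    have h := congrArg (Wᵀ * ·) (P.hq3 j)
    have h1 : Wᵀ * P.q 1 = 0 := IH 1 (by omega) (by norm_num)
    have h2 : Wᵀ * P.q (j+2) = 0 := IH (j+2) (by omega) (by omega)
    simpa [Matrix.mul_sub, Matrix.sub_mul, Matrix.mul_add, Matrix.add_mul,
      ← Matrix.mul_assoc, P.hW, h1, h2] using h

lemma orth (hA : Aᵀ = A) : ∀ l i, 1 ≤ i → i < l → (P.q i)ᵀ * P.q l = 0 := by
  intro l
  induction l using Nat.strong_induction_on with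
  | _ l IH =>
  intro i hi hil
  have hWi : (P.q i)ᵀ * W = 0 := by
    have h := qW P i hi
    calc (P.q i)ᵀ * W = (Wᵀ * P.q i)ᵀ := by simp
      _ = 0 := by rw [h]; simp
  match l, hil with
  | 0, hh => omega
  | 1, hh => omega
  | 2, hh =>
    have hi1 : i = 1 := by omega
    subst hi1
    apply cancel_right (P.βs 0) (P.hβsrank 0)
    have h := congrArg ((P.q 1)ᵀ * ·) P.hq2
    simpa [Matrix.mul_sub, Matrix.sub_mul, Matrix.mul_add, Matrix.add_mul,
      ← Matrix.mul_assoc, P.horth 1 le_rfl, hWi] using h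
  | (s+3), hh =>
    apply cancel_right (P.βs (s+1)) (P.hβsrank (s+1))
    have h := congrArg ((P.q i)ᵀ * ·) (P.hq3 s)
    by_cases hi1 : i = 1
    · subst hi1
      have h2 : (P.q 1)ᵀ * P.q (s+2) = 0 := IH (s+2) (by omega) 1 le_rfl (by omega)
      simpa [Matrix.mul_sub, Matrix.sub_mul, Matrix.mul_add, Matrix.add_mul,
        ← Matrix.mul_assoc, P.horth 1 le_rfl, hWi, h2] using h
    · have hq1i : (P.q i)ᵀ * P.q 1 = 0 := by
        have h2 : (P.q 1)ᵀ * P.q i = 0 := IH i (by omega) 1 le_rfl (by omega)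
        calc (P.q i)ᵀ * P.q 1 = ((P.q 1)ᵀ * P.q i)ᵀ := by simp
          _ = 0 := by rw [h2]; simp
      by_cases hitop : i = s + 2
      · subst hitop
        simpa [Matrix.mul_sub, Matrix.sub_mul, Matrix.mul_add, Matrix.add_mul,
          ← Matrix.mul_assoc, P.horth (s+2) (by omega), hWi, hq1i] using h
      · -- 2 ≤ i ≤ s+1
        obtain ⟨t, rfl⟩ : ∃ t, i = t + 2 := ⟨i - 2, by omega⟩
        have hts : t + 2 ≤ s + 1 := by omega
        have hiq : (P.q (t+2))ᵀ * P.q (s+2) = 0 := IH (s+2) (by omega) (t+2) (by omega) (by omega)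
        have hmain : (P.q (t+2))ᵀ * P.q (s+3) * P.βs (s+1)
            = (P.q (t+2))ᵀ * A * P.q (s+2) - (P.q (t+2))ᵀ * P.q (s+1) * (P.βs s)ᵀ := by
          simpa [Matrix.mul_sub, Matrix.sub_mul, Matrix.mul_add, Matrix.add_mul,
            ← Matrix.mul_assoc, hWi, hq1i, hiq] using h
        rw [hmain]
        -- key: q(t+2)ᵀ * A * q(s+2) = βs(t+1)ᵀ * (q(t+3)ᵀ * q(s+2))
        have hW2 : Wᵀ * P.q (s+2) = 0 := qW P (s+2) (by omega)
        have h12 : (P.q 1)ᵀ * P.q (s+2) = 0 := IH (s+2) (by omega) 1 le_rfl (by omega)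
        have ht1 : (P.q (t+1))ᵀ * P.q (s+2) = 0 := IH (s+2) (by omega) (t+1) (by omega) (by omega)
        have key := congrArg (fun M => Mᵀ * P.q (s+2)) (P.hq3 t)
        simp only [Matrix.transpose_mul, Matrix.transpose_sub, Matrix.transpose_add,
          Matrix.transpose_one, Matrix.transpose_transpose, Matrix.sub_mul, Matrix.add_mul,
          Matrix.one_mul, Matrix.mul_assoc, hA] at key
        rw [hW2, h12, hiq, ht1] at key
        simp only [Matrix.mul_zero, sub_zero, add_zero, zero_add, Matrix.sub_mul] at key
        -- key : βs(t+1)ᵀ * (q(t+3)ᵀ * q(s+2)) = q(t+2)ᵀ * (A * q(s+2)) - 0 ?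
        by_cases hlast : t + 2 = s + 1
        · obtain rfl : s = t + 1 := by omega
          rw [P.horth (t+3) (by omega)] at key
          rw [← Matrix.mul_assoc] at key
          rw [← key]
          have horth2 : (P.q (t+2))ᵀ * P.q (t+1+1) = 1 := P.horth (t+2) (by omega)
          rw [horth2]
          simp
        · have hlast2 : (P.q (t+3))ᵀ * P.q (s+2) = 0 :=
            IH (s+2) (by omega) (t+3) (by omega) (by omega)
          have hmid : (P.q (t+2))ᵀ * P.q (s+1) = 0 := IH (s+1) (by omega) (t+2) (by omega) (by omega)
          rw [hlast2] at key
          rw [Matrix.mul_assoc ((P.q (t+2))ᵀ) A, ← key, hmid]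
          simp

/-- in the continuation process, for all `j ≥ 3` (written `j + 3` below),
`q_{k+1}(q_{k+1}ᵀ A q_{k+j-1} - q_{k+1}ᵀ q_{k+j-2} β_{k+j-1}ᵀ) = q_{k+1} β_{k+1} v_kᵀ q_{k+j-1}`. -/
theorem stmt8 (n p m : ℕ) (A : Matrix (Fin n) (Fin n) ℝ) (hA : A.IsHermitian)
    (vkm1 vk : Matrix (Fin n) (Fin p) ℝ) (αk βk : Matrix (Fin p) (Fin p) ℝ)
    (W : Matrix (Fin n) (Fin m) ℝ)
    (P : ContProcess n p m A vkm1 vk αk βk W) :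
    ∀ j, P.q 1 * ((P.q 1)ᵀ * A * P.q (j+2) - (P.q 1)ᵀ * P.q (j+1) * (P.βs j)ᵀ) =
      P.q 1 * P.β1 * vkᵀ * P.q (j+2) := by
  intro j
  have hA' : Aᵀ = A := by
    have h := hA.eq
    rwa [Matrix.conjTranspose_eq_transpose_of_trivial] at h
  have key := congrArg (fun M => Mᵀ * P.q (j+2)) P.hq2
  have hW2 : Wᵀ * P.q (j+2) = 0 := qW P (j+2) (by omega)
  have h12 : (P.q 1)ᵀ * P.q (j+2) = 0 := orth P hA' (j+2) 1 le_rfl (by omega)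
  simp only [Matrix.transpose_mul, Matrix.transpose_sub, Matrix.transpose_add,
    Matrix.transpose_one, Matrix.transpose_transpose, Matrix.sub_mul, Matrix.add_mul,
    Matrix.one_mul, Matrix.mul_assoc, hA'] at key
  rw [hW2, h12] at key
  simp only [Matrix.mul_zero, sub_zero, add_zero, zero_add] at key
  have kA : (P.q 1)ᵀ * (A * P.q (j+2))
      = (P.βs 0)ᵀ * ((P.q 2)ᵀ * P.q (j+2)) + P.β1 * (vkᵀ * P.q (j+2)) :=
    sub_eq_iff_eq_add.mp key.symm
  rw [Matrix.mul_assoc ((P.q 1)ᵀ) A, kA]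
  match j with
  | 0 =>
    rw [P.horth 2 (by omega), P.horth 1 (by omega)]
    simp [Matrix.mul_add, Matrix.mul_sub, Matrix.mul_assoc]
  | (t+1) =>
    have h22 : (P.q 2)ᵀ * P.q (t+3) = 0 := orth P hA' (t+3) 2 (by omega) (by omega)
    have h11 : (P.q 1)ᵀ * P.q (t+2) = 0 := orth P hA' (t+2) 1 le_rfl (by omega)
    rw [h22, h11]
    simp [Matrix.mul_add, Matrix.mul_sub, Matrix.mul_assoc]
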